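/- Let 0 ≤ l ≤ n. Then, as a permutation of I_n, a_l(i) = i − 1 − l for 1 ≤ i ≤ l and a_l(i) = i for l+1 ≤ i ≤ n; and ℓ(a_l) = l(l+1)/2. -/

import Mathlib

/-!
Common setup: the Weyl group `W n` of type `B_n`, realized as the group of
permutations `w` of `I_n = {±1, …, ±n}` (inside `Equiv.Perm ℤ`, fixing every
integer of absolute value `> n`) such that `w (-i) = - w i` for all `i`.
-/

namespace TypeB

/-- The generator `t = (1, -1)`. -/
def t : Equiv.Perm ℤ := Equiv.swap 1 (-1)

/-- The generator `s i = (i, i+1)(-i, -(i+1))` (meaningful for `1 ≤ i`). -/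
def s (i : ℕ) : Equiv.Perm ℤ :=
  Equiv.swap (i : ℤ) ((i : ℤ) + 1) * Equiv.swap (-(i : ℤ)) (-((i : ℤ) + 1))

/-- The generating set `S_n = {t, s_1, …, s_{n-1}}`. -/
def gens (n : ℕ) : Set (Equiv.Perm ℤ) :=
  {t} ∪ {x | ∃ i : ℕ, 1 ≤ i ∧ i < n ∧ x = s i}

/-- The Weyl group `W_n` of type `B_n`, as a subgroup of `Equiv.Perm ℤ`:
permutations `w` with `w (-i) = - (w i)` for all `i` and fixing all `i` with `|i| > n`. -/
def W (n : ℕ) : Subgroup (Equiv.Perm ℤ) where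
  carrier := {w | (∀ i : ℤ, w (-i) = - w i) ∧ ∀ i : ℤ, (n : ℤ) < |i| → w i = i}
  one_mem' := ⟨fun _ => rfl, fun _ _ => rfl⟩
  mul_mem' := by
    rintro u v ⟨hu1, hu2⟩ ⟨hv1, hv2⟩
    refine ⟨fun i => ?_, fun i hi => ?_⟩
    · simp only [Equiv.Perm.mul_apply, hv1, hu1]
    · simp only [Equiv.Perm.mul_apply, hv2 i hi, hu2 i hi]
  inv_mem' := by
    rintro u ⟨hu1, hu2⟩
    refine ⟨fun i => ?_, fun i hi => ?_⟩
    · apply u.injective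
      rw [(show ∀ x, u (u⁻¹ x) = x from u.apply_symm_apply), hu1, (show ∀ x, u (u⁻¹ x) = x from u.apply_symm_apply)]
    · apply u.injective
      rw [(show ∀ x, u (u⁻¹ x) = x from u.apply_symm_apply), hu2 i hi]

/-- The length of `w` with respect to the generating set `S_n`. -/
noncomputable def len (n : ℕ) (w : Equiv.Perm ℤ) : ℕ :=
  sInf {k | ∃ l : List (Equiv.Perm ℤ), (∀ x ∈ l, x ∈ gens n) ∧ l.prod = w ∧ l.length = k}

/-- `l` is a reduced expression for `w` with respect to `S_n`. -/
def IsReduced (n : ℕ) (w : Equiv.Perm ℤ) (l : List (Equiv.Perm ℤ)) : Prop :=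
  (∀ x ∈ l, x ∈ gens n) ∧ l.prod = w ∧ l.length = len n w

/-- `ℓ_t w`: the number of occurrences of `t` in a reduced expression of `w`
(independent of the chosen reduced expression). -/
noncomputable def lent (n : ℕ) (w : Equiv.Perm ℤ) : ℕ :=
  letI : DecidableEq (Equiv.Perm ℤ) := Classical.decEq _
  sInf {m | ∃ l, IsReduced n w l ∧ l.count t = m}

/-- `r 1 = t` and `r (i+1) = s i * r i`. -/
def r : ℕ → Equiv.Perm ℤ
  | 0 => 1
  | 1 => t
  | (i + 2) => s (i + 1) * r (i + 1)

/-- `t_1 = t` and `t_{i+1} = s_i * t_i * s_i`. -/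
def tperm : ℕ → Equiv.Perm ℤ
  | 0 => 1
  | 1 => t
  | (i + 2) => s (i + 1) * tperm (i + 1) * s (i + 1)

/-- `a l = r 1 * r 2 * ⋯ * r l`, with `a 0 = 1`. -/
def a : ℕ → Equiv.Perm ℤ
  | 0 => 1
  | (l + 1) => a l * r (l + 1)

/-- The symmetric group `𝔖_n`: the subgroup generated by `s_1, …, s_{n-1}`. -/
def Sym (n : ℕ) : Subgroup (Equiv.Perm ℤ) :=
  Subgroup.closure {x | ∃ i : ℕ, 1 ≤ i ∧ i < n ∧ x = s i}

/-- The parabolic subgroup `𝔖_{l,n-l}`: generated by `{s_1, …, s_{n-1}} \ {s_l}`. -/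
def SymP (n l : ℕ) : Subgroup (Equiv.Perm ℤ) :=
  Subgroup.closure {x | ∃ i : ℕ, 1 ≤ i ∧ i < n ∧ i ≠ l ∧ x = s i}

/-- `Y_{l,n-l}`: elements of `𝔖_n` of minimal length in their coset `w 𝔖_{l,n-l}`. -/
def Y (n l : ℕ) : Set (Equiv.Perm ℤ) :=
  {w | w ∈ Sym n ∧ ∀ u ∈ SymP n l, len n w ≤ len n (w * u)}

/-- The subgroup `𝔖_{[i,j]}` generated by `s_i, …, s_{j-1}`. -/
def SymI (i j : ℕ) : Subgroup (Equiv.Perm ℤ) :=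
  Subgroup.closure {x | ∃ k : ℕ, i ≤ k ∧ k < j ∧ x = s k}

/-- The function reversing the interval `[i,j]` (and `[-j,-i]`), for `1 ≤ i`. -/
def revFun (i j : ℤ) : ℤ → ℤ := fun k =>
  if 1 ≤ i ∧ i ≤ k ∧ k ≤ j then i + j - k
  else if 1 ≤ i ∧ -j ≤ k ∧ k ≤ -i then -(i + j) - k
  else k

lemma revFun_involutive (i j : ℤ) : Function.Involutive (revFun i j) := by
  intro k
  unfold revFun
  split_ifs <;> omega

/-- `σ_{[i,j]}`: the longest element of `𝔖_{[i,j]}`, i.e. the order-reversing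
permutation of the interval `[i,j]` (extended to `I_n` by `w(-k) = -w(k)`). -/
def sigmaI (i j : ℕ) : Equiv.Perm ℤ := (revFun_involutive (i : ℤ) (j : ℤ)).toPerm

/-- `σ_{l,n-l}`: the longest element of `𝔖_{l,n-l} = 𝔖_{[1,l]} × 𝔖_{[l+1,n]}`. -/
def sigmaLL (n l : ℕ) : Equiv.Perm ℤ := sigmaI 1 l * sigmaI (l + 1) n

/-- The function negating all `k` with `|k| ≤ n`. -/
def negnFun (n : ℤ) : ℤ → ℤ := fun k => if -n ≤ k ∧ k ≤ n then -k else k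

lemma negnFun_involutive (n : ℤ) : Function.Involutive (negnFun n) := by
  intro k
  unfold negnFun
  split_ifs <;> omega

/-- `w_n`: the longest element of `W_n`; as a permutation, `w_n i = -i` for `|i| ≤ n`. -/
def wlong (n : ℕ) : Equiv.Perm ℤ := (negnFun_involutive (n : ℤ)).toPerm

/-- `c_I = s_{i_1} s_{i_2} ⋯ s_{i_k}` for `I = {i_1 < i_2 < ⋯ < i_k}`. -/
def cElt (I : Finset ℕ) : Equiv.Perm ℤ := ((I.sort (· ≤ ·)).map s).prod

/-- `d_I = s_{i_k} ⋯ s_{i_2} s_{i_1}` for `I = {i_1 < i_2 < ⋯ < i_k}`. -/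
def dElt (I : Finset ℕ) : Equiv.Perm ℤ := (((I.sort (· ≤ ·)).map s).reverse).prod

/-- `X_n^{(m)}`: elements of `W_n` of minimal length in their coset `w W_m`. -/
def X (n m : ℕ) : Set (Equiv.Perm ℤ) :=
  {w | w ∈ W n ∧ ∀ u ∈ W m, len n w ≤ len n (w * u)}

/-- Bruhat order: `x ≤ y` iff some reduced expression of `y` contains a subword
which is a reduced expression of `x`. -/
def BruhatLE (n : ℕ) (x y : Equiv.Perm ℤ) : Prop :=
  ∃ ly, IsReduced n y ly ∧ ∃ lx, lx.Sublist ly ∧ IsReduced n x lx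

/-- Strict Bruhat order. -/
def BruhatLT (n : ℕ) (x y : Equiv.Perm ℤ) : Prop := BruhatLE n x y ∧ x ≠ y

/-- `D_i(W_n)`: the set of `x` such that exactly one of `s_i, s_{i+1}` is a
(right) descent of `x`. -/
def Dset (n i : ℕ) : Set (Equiv.Perm ℤ) :=
  {x | Xor' (len n (x * s i) < len n x) (len n (x * s (i + 1)) < len n x)}

open Classical in
/-- `γ_i x`: the unique element of `{x s_i, x s_{i+1}} ∩ D_i(W_n)` (for `x ∈ D_i(W_n)`). -/
noncomputable def gamma (n i : ℕ) (x : Equiv.Perm ℤ) : Equiv.Perm ℤ :=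
  if x * s i ∈ Dset n i then x * s i else x * s (i + 1)

/-- `E_m^{(r)}`: the set of `w ∈ W_m` such that `|w 1| > |w i|` for `2 ≤ i ≤ r+2`
and `(w 2, …, w (r+2))` is a shuffle of a positive decreasing sequence and a
negative increasing sequence. -/
def E (m ρ : ℕ) : Set (Equiv.Perm ℤ) :=
  {w | w ∈ W m ∧ (∀ i : ℕ, 2 ≤ i → i ≤ ρ + 2 → |w (i : ℤ)| < |w (1 : ℤ)|) ∧
    ∀ i j : ℕ, 2 ≤ i → i < j → j ≤ ρ + 2 →
      (0 < w (i : ℤ) → 0 < w (j : ℤ) → w (j : ℤ) < w (i : ℤ)) ∧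
      (w (i : ℤ) < 0 → w (j : ℤ) < 0 → w (i : ℤ) < w (j : ℤ))}

/-- The product `r_{i_1} ⋯ r_{i_l}` for a sequence `i : Fin l → ℕ`. -/
def prodR {l : ℕ} (i : Fin l → ℕ) : Equiv.Perm ℤ := (List.ofFn fun k => r (i k)).prod

/-- `(l, α, β, σ)` is a decomposition of `w` as in the decomposition lemma:
`l ≤ n`, `α, β ∈ Y_{l,n-l}`, `σ ∈ 𝔖_{l,n-l}` and `w = α a_l σ β⁻¹`. -/
def IsDecomp (n : ℕ) (w : Equiv.Perm ℤ) (l : ℕ) (α β σ : Equiv.Perm ℤ) : Prop :=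
  l ≤ n ∧ α ∈ Y n l ∧ β ∈ Y n l ∧ σ ∈ SymP n l ∧ w = α * a l * σ * β⁻¹



section Aux

lemma t_apply (x : ℤ) : t x = if x = 1 then -1 else if x = -1 then 1 else x := by
  unfold t; rw [Equiv.swap_apply_def]

lemma s_apply (i : ℕ) (hi : 1 ≤ i) (x : ℤ) :
    s i x = if x = (i:ℤ) then (i:ℤ)+1 else if x = (i:ℤ)+1 then (i:ℤ)
      else if x = -(i:ℤ) then -((i:ℤ)+1) else if x = -((i:ℤ)+1) then -(i:ℤ) else x := by
  unfold s
  simp only [Equiv.Perm.mul_apply, Equiv.swap_apply_def]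
  split_ifs <;> omega

lemma r_apply : ∀ (k : ℕ), 1 ≤ k → ∀ x : ℤ,
    r k x = if x = 1 then -(k:ℤ) else if 2 ≤ x ∧ x ≤ (k:ℤ) then x - 1
      else if x = -1 then (k:ℤ) else if -(k:ℤ) ≤ x ∧ x ≤ -2 then x + 1 else x
  | 0, h => by omega
  | 1, _ => fun x => by
      rw [show r 1 = t from rfl, t_apply]; split_ifs <;> omega
  | (k+2), _ => fun x => by
      rw [show r (k+2) = s (k+1) * r (k+1) from rfl, Equiv.Perm.mul_apply,
        r_apply (k+1) (by omega) x, s_apply (k+1) (by omega)]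
      split_ifs <;> omega

lemma a_apply : ∀ (l : ℕ) (x : ℤ),
    a l x = if 1 ≤ x ∧ x ≤ (l:ℤ) then x - 1 - (l:ℤ)
      else if -(l:ℤ) ≤ x ∧ x ≤ -1 then x + 1 + (l:ℤ) else x
  | 0, x => by
      rw [show a 0 = 1 from rfl]
      simp only [Equiv.Perm.one_apply, Nat.cast_zero]
      split_ifs <;> omega
  | (l+1), x => by
      rw [show a (l+1) = a l * r (l+1) from rfl, Equiv.Perm.mul_apply,
        r_apply (l+1) (by omega) x, a_apply l]
      split_ifs <;> omega

/-- The statistic `N(w) = Σ_{i=1}^n max(0, -w(i))`, a lower bound for length. -/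
def NN (n : ℕ) (w : Equiv.Perm ℤ) : ℕ := ∑ i ∈ Finset.Icc 1 n, (-(w (i:ℤ))).toNat

lemma fneg_bound {n : ℕ} {g : Equiv.Perm ℤ} (hg : g ∈ gens n) :
    ∃ c : ℤ, ∀ v : ℤ, (-(g v)).toNat ≤ (-v).toNat + (if v = c then 1 else 0) := by
  simp only [gens, Set.mem_union, Set.mem_singleton_iff, Set.mem_setOf_eq] at hg
  rcases hg with rfl | ⟨i, hi1, _, rfl⟩
  · exact ⟨1, fun v => by rw [t_apply]; split_ifs <;> omega⟩
  · exact ⟨-(i:ℤ), fun v => by rw [s_apply i hi1]; split_ifs <;> omega⟩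

lemma NN_mul_le (n : ℕ) {g : Equiv.Perm ℤ} (hg : g ∈ gens n) (w : Equiv.Perm ℤ) :
    NN n (g * w) ≤ NN n w + 1 := by
  obtain ⟨c, hc⟩ := fneg_bound hg
  have h1 : NN n (g * w) ≤
      ∑ i ∈ Finset.Icc 1 n, ((-(w (i:ℤ))).toNat + if w (i:ℤ) = c then 1 else 0) :=
    Finset.sum_le_sum fun i _ => hc (w (i:ℤ))
  rw [Finset.sum_add_distrib] at h1
  have h2 : (∑ i ∈ Finset.Icc 1 n, if w (i:ℤ) = c then 1 else 0) ≤ 1 := by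
    rw [← Finset.card_filter]
    refine Finset.card_le_one.mpr fun p hp q hq => ?_
    simp only [Finset.mem_filter] at hp hq
    exact_mod_cast w.injective (hp.2.trans hq.2.symm)
  calc NN n (g * w) ≤ NN n w + ∑ i ∈ Finset.Icc 1 n, (if w (i:ℤ) = c then 1 else 0) := h1
    _ ≤ NN n w + 1 := by omega

lemma NN_prod_le (n : ℕ) : ∀ L : List (Equiv.Perm ℤ),
    (∀ x ∈ L, x ∈ gens n) → NN n L.prod ≤ L.length
  | [], _ => by
      simp only [List.prod_nil, List.length_nil]
      refine Nat.le_of_eq (Finset.sum_eq_zero fun i hi => ?_)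
      rw [Finset.mem_Icc] at hi
      have h1 : (1:ℤ) ≤ (i:ℤ) := by exact_mod_cast hi.1
      simp only [Equiv.Perm.one_apply]
      omega
  | (g :: L), h => by
      rw [List.prod_cons]
      calc NN n (g * L.prod) ≤ NN n L.prod + 1 := NN_mul_le n (h g (.head _)) _
        _ ≤ L.length + 1 := by
            have := NN_prod_le n L (fun x hx => h x (.tail _ hx)); omega
        _ = (g :: L).length := by simp

/-- The canonical reduced word for `r k`. -/
def wordR : ℕ → List (Equiv.Perm ℤ)
  | 0 => []
  | 1 => [t]
  | (k+2) => s (k+1) :: wordR (k+1)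

lemma wordR_prod : ∀ k, (wordR k).prod = r k
  | 0 => by simp [wordR, r]
  | 1 => by simp [wordR, r]
  | (k+2) => by
      show (s (k+1) :: wordR (k+1)).prod = s (k+1) * r (k+1)
      rw [List.prod_cons, wordR_prod (k+1)]

lemma wordR_length : ∀ k, (wordR k).length = k
  | 0 => rfl
  | 1 => rfl
  | (k+2) => by
      show (s (k+1) :: wordR (k+1)).length = k+2
      rw [List.length_cons, wordR_length (k+1)]

lemma wordR_mem (n : ℕ) : ∀ k, k ≤ n → ∀ x ∈ wordR k, x ∈ gens n
  | 0, _ => by intro x hx; simp [wordR] at hx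
  | 1, _ => by
      intro x hx
      simp only [wordR, List.mem_singleton] at hx
      exact Or.inl (by simp [hx])
  | (k+2), hk => by
      intro x hx
      rcases (by exact hx : x ∈ s (k+1) :: wordR (k+1)) with _ | h
      · exact Or.inr ⟨k+1, by omega, by omega, rfl⟩
      · exact wordR_mem n (k+1) (by omega) x (by assumption)

/-- The canonical reduced word for `a l`. -/
def wordA : ℕ → List (Equiv.Perm ℤ)
  | 0 => []
  | (l+1) => wordA l ++ wordR (l+1)

lemma wordA_prod : ∀ l, (wordA l).prod = a l
  | 0 => rfl
  | (l+1) => by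
      show (wordA l ++ wordR (l+1)).prod = a l * r (l+1)
      rw [List.prod_append, wordA_prod l, wordR_prod]

lemma wordA_length : ∀ l, 2 * (wordA l).length = l * (l+1)
  | 0 => rfl
  | (l+1) => by
      show 2 * (wordA l ++ wordR (l+1)).length = (l+1) * (l+2)
      rw [List.length_append, wordR_length, Nat.mul_add, wordA_length l]
      ring

lemma wordA_mem (n : ℕ) : ∀ l, l ≤ n → ∀ x ∈ wordA l, x ∈ gens n
  | 0, _ => by intro x hx; simp [wordA] at hx
  | (l+1), hl => by
      intro x hx
      rcases List.mem_append.mp (by exact hx : x ∈ wordA l ++ wordR (l+1)) with h | h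
      · exact wordA_mem n l (by omega) x h
      · exact wordR_mem n (l+1) hl x h

lemma gauss : ∀ l : ℕ, 2 * (∑ i ∈ Finset.Icc 1 l, (l + 1 - i)) = l * (l+1)
  | 0 => by simp
  | (l+1) => by
      rw [Finset.sum_Icc_succ_top (by omega : 1 ≤ l+1)]
      have h : ∑ i ∈ Finset.Icc 1 l, (l + 1 + 1 - i)
          = (∑ i ∈ Finset.Icc 1 l, (l + 1 - i)) + l := by
        rw [Finset.sum_congr rfl (fun i hi => by
          rw [Finset.mem_Icc] at hi
          omega : ∀ i ∈ Finset.Icc 1 l, l + 1 + 1 - i = (l + 1 - i) + 1),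
          Finset.sum_add_distrib, Finset.sum_const, smul_eq_mul, Nat.card_Icc]
        omega
      have hg := gauss l
      have he : (l+1) * (l+1+1) = l * (l+1) + 2*(l+1) := by ring
      omega

lemma NN_a (n l : ℕ) (hl : l ≤ n) : NN n (a l) = l * (l+1) / 2 := by
  have h1 : NN n (a l) = ∑ i ∈ Finset.Icc 1 n, (if i ≤ l then l + 1 - i else 0) := by
    refine Finset.sum_congr rfl fun i hi => ?_
    rw [Finset.mem_Icc] at hi
    rw [a_apply]
    have h1 : (1:ℤ) ≤ (i:ℤ) := by exact_mod_cast hi.1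
    split_ifs <;> omega
  rw [h1, ← Finset.sum_filter]
  have h2 : (Finset.Icc 1 n).filter (fun i => i ≤ l) = Finset.Icc 1 l := by
    ext i; simp only [Finset.mem_filter, Finset.mem_Icc]; omega
  rw [h2]
  rw [← gauss l]; omega

lemma len_a (n l : ℕ) (hl : l ≤ n) : len n (a l) = l * (l+1) / 2 := by
  have hmem : (l*(l+1)/2) ∈ {k | ∃ L : List (Equiv.Perm ℤ),
      (∀ x ∈ L, x ∈ gens n) ∧ L.prod = a l ∧ L.length = k} := by
    refine ⟨wordA l, wordA_mem n l hl, wordA_prod l, ?_⟩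
    have h2 := wordA_length l
    rw [← h2]; omega
  have hub : len n (a l) ≤ l*(l+1)/2 := Nat.sInf_le hmem
  obtain ⟨L, hL1, hL2, hL3⟩ := Nat.sInf_mem ⟨_, hmem⟩
  have hlb := NN_prod_le n L hL1
  rw [hL2, hL3] at hlb
  have hN := NN_a n l hl
  exact le_antisymm hub (by rw [hN] at hlb; exact hlb)

end Aux

/-- for `0 ≤ l ≤ n`, as a permutation `a_l(i) = i - 1 - l` for
`1 ≤ i ≤ l` and `a_l(i) = i` for `l+1 ≤ i ≤ n`; and `ℓ(a_l) = l(l+1)/2`. -/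

theorem stmt16 (n l : ℕ) (hl : l ≤ n) :
    (∀ i : ℕ, 1 ≤ i → i ≤ l → a l (i : ℤ) = (i : ℤ) - 1 - (l : ℤ)) ∧
    (∀ i : ℕ, l + 1 ≤ i → i ≤ n → a l (i : ℤ) = (i : ℤ)) ∧
    len n (a l) = l * (l + 1) / 2 := by
  refine ⟨fun i h1 h2 => ?_, fun i h1 h2 => ?_, len_a n l hl⟩
  · rw [a_apply]; split_ifs <;> omega
  · rw [a_apply]; split_ifs <;> omega

end TypeB
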